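/- For nonzero vectors x, y, z in a finite-dimensional real or complex inner product space, |sin(θ(x,z)) − sin(θ(y,z))| ≤ sin(θ(x,y)), where θ(u,v) = arccos(|(u,v)|/(‖u‖‖v‖)) ∈ [0, π/2] is the acute angle between u and v. -/

import Mathlib

open scoped InnerProductSpace ComplexConjugate

lemma key_alg (a b c : ℝ) (ha : 0 ≤ a) (hb : 0 ≤ b) (hc : 0 ≤ c)
    (ha1 : a ≤ 1) (hb1 : b ≤ 1)
    (hgram : c ≤ a * b + Real.sqrt ((1 - a ^ 2) * (1 - b ^ 2))) :
    |Real.sqrt (1 - a ^ 2) - Real.sqrt (1 - b ^ 2)| ≤ Real.sqrt (1 - c ^ 2) := by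
  have hap : (0:ℝ) ≤ 1 - a ^ 2 := by nlinarith
  have hbp : (0:ℝ) ≤ 1 - b ^ 2 := by nlinarith
  set p := Real.sqrt (1 - a ^ 2) with hp
  set q := Real.sqrt (1 - b ^ 2) with hq
  have hp0 : 0 ≤ p := Real.sqrt_nonneg _
  have hq0 : 0 ≤ q := Real.sqrt_nonneg _
  have hp2 : p ^ 2 = 1 - a ^ 2 := Real.sq_sqrt hap
  have hq2 : q ^ 2 = 1 - b ^ 2 := Real.sq_sqrt hbp
  have hmul : Real.sqrt ((1 - a ^ 2) * (1 - b ^ 2)) = p * q := by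
    rw [Real.sqrt_mul hap]
  rw [hmul] at hgram
  have hab : a * b ≤ 1 := by nlinarith
  have hpq : p * q ≤ 1 - a * b := by
    nlinarith [mul_nonneg hp0 hq0, sq_nonneg (a - b), sq_nonneg (p*q)]
  have hc2 : c ^ 2 ≤ (a * b + p * q) ^ 2 := by
    have h0 : 0 ≤ a * b + p * q := by positivity
    nlinarith
  have hw2 : (p - q) ^ 2 ≤ 1 - c ^ 2 := by
    nlinarith [mul_nonneg hp0 hq0, mul_nonneg (mul_nonneg hp0 hq0) (sub_nonneg.mpr hpq)]
  have := Real.sqrt_le_sqrt hw2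
  rwa [Real.sqrt_sq_eq_abs] at this

lemma gram_ineq {𝕜 H : Type*} [RCLike 𝕜] [NormedAddCommGroup H]
    [InnerProductSpace 𝕜 H] (x y z : H) (hx : ‖x‖ = 1) (hy : ‖y‖ = 1) (hz : ‖z‖ = 1) :
    ‖(inner 𝕜 x y : 𝕜)‖ ≤ ‖(inner 𝕜 x z : 𝕜)‖ * ‖(inner 𝕜 y z : 𝕜)‖ +
      Real.sqrt ((1 - ‖(inner 𝕜 x z : 𝕜)‖ ^ 2) * (1 - ‖(inner 𝕜 y z : 𝕜)‖ ^ 2)) := by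
  set α : 𝕜 := inner 𝕜 z x with hα
  set β : 𝕜 := inner 𝕜 z y with hβ
  have hzz : (inner 𝕜 z z : 𝕜) = 1 := by
    rw [inner_self_eq_norm_sq_to_K, hz]; simp
  have hnax : ‖α‖ = ‖(inner 𝕜 x z : 𝕜)‖ := by rw [hα, norm_inner_symm]
  have hnby : ‖β‖ = ‖(inner 𝕜 y z : 𝕜)‖ := by rw [hβ, norm_inner_symm]
  set x' : H := x - α • z with hx'
  set y' : H := y - β • z with hy'
  have hxz : (inner 𝕜 x z : 𝕜) = conj α := by rw [hα, inner_conj_symm]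
  have hyz : (inner 𝕜 y z : 𝕜) = conj β := by rw [hβ, inner_conj_symm]
  have hkey : (inner 𝕜 x y : 𝕜) = inner 𝕜 x' y' + conj α * β := by
    rw [hx', hy', inner_sub_left, inner_sub_right, inner_sub_right,
      inner_smul_left, inner_smul_right, inner_smul_left, inner_smul_right, hzz, hxz, hβ]
    ring
  have hnx' : ‖x'‖ ^ 2 = 1 - ‖α‖ ^ 2 := by
    have h := @norm_sub_sq 𝕜 H _ _ _ x (α • z)
    rw [inner_smul_right, hxz, norm_smul, hz, hx, mul_one] at h
    rw [hx', h, RCLike.mul_conj, ← RCLike.ofReal_pow, RCLike.ofReal_re]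
    ring
  have hny' : ‖y'‖ ^ 2 = 1 - ‖β‖ ^ 2 := by
    have h := @norm_sub_sq 𝕜 H _ _ _ y (β • z)
    rw [inner_smul_right, hyz, norm_smul, hz, hy, mul_one] at h
    rw [hy', h, RCLike.mul_conj, ← RCLike.ofReal_pow, RCLike.ofReal_re]
    ring
  have h1 : ‖(inner 𝕜 x y : 𝕜)‖ ≤ ‖x'‖ * ‖y'‖ + ‖α‖ * ‖β‖ := by
    calc ‖(inner 𝕜 x y : 𝕜)‖ ≤ ‖(inner 𝕜 x' y' : 𝕜)‖ + ‖conj α * β‖ := by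
          rw [hkey]; exact norm_add_le _ _
      _ ≤ ‖x'‖ * ‖y'‖ + ‖α‖ * ‖β‖ := by
          gcongr
          · exact norm_inner_le_norm x' y'
          · rw [norm_mul, RCLike.norm_conj]
  have hsq : Real.sqrt ((1 - ‖(inner 𝕜 x z : 𝕜)‖ ^ 2) * (1 - ‖(inner 𝕜 y z : 𝕜)‖ ^ 2)) = ‖x'‖ * ‖y'‖ := by
    rw [← hnax, ← hnby, ← hnx', ← hny', Real.sqrt_mul (sq_nonneg _), Real.sqrt_sq (norm_nonneg _),
      Real.sqrt_sq (norm_nonneg _)]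
  rw [hsq, ← hnax, ← hnby]
  linarith

/-- The acute angle between two vectors of an inner product space over `𝕜 = ℝ` or `ℂ`:
`θ(x,y) = arccos (|(x,y)| / (‖x‖‖y‖)) ∈ [0, π/2]`. -/
noncomputable def acuteAngle (𝕜 : Type*) {H : Type*} [RCLike 𝕜] [NormedAddCommGroup H]
    [InnerProductSpace 𝕜 H] (x y : H) : ℝ :=
  Real.arccos (‖(inner 𝕜 x y : 𝕜)‖ / (‖x‖ * ‖y‖))

lemma norm_inner_normalize {𝕜 H : Type*} [RCLike 𝕜] [NormedAddCommGroup H]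
    [InnerProductSpace 𝕜 H] (x y : H) :
    ‖(inner 𝕜 ((‖x‖:𝕜)⁻¹ • x) ((‖y‖:𝕜)⁻¹ • y) : 𝕜)‖ = ‖(inner 𝕜 x y : 𝕜)‖ / (‖x‖ * ‖y‖) := by
  rw [inner_smul_left, inner_smul_right, norm_mul, norm_mul, RCLike.norm_conj, norm_inv,
    norm_inv, RCLike.norm_ofReal, RCLike.norm_ofReal, abs_norm, abs_norm]
  field_simp

lemma norm_normalize {𝕜 H : Type*} [RCLike 𝕜] [NormedAddCommGroup H]
    [InnerProductSpace 𝕜 H] (x : H) (hx : x ≠ 0) : ‖(‖x‖:𝕜)⁻¹ • x‖ = 1 := by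
  rw [norm_smul, norm_inv, RCLike.norm_ofReal, abs_norm]
  exact inv_mul_cancel₀ (norm_ne_zero_iff.mpr hx)

/-- For nonzero vectors `x, y, z` in a finite-dimensional real or complex inner product space,
`|sin θ(x,z) − sin θ(y,z)| ≤ sin θ(x,y)`. -/
theorem sin_angle_diff_le {𝕜 H : Type*} [RCLike 𝕜] [NormedAddCommGroup H]
    [InnerProductSpace 𝕜 H] [FiniteDimensional 𝕜 H]
    (x y z : H) (hx : x ≠ 0) (hy : y ≠ 0) (hz : z ≠ 0) :
    |Real.sin (acuteAngle 𝕜 x z) - Real.sin (acuteAngle 𝕜 y z)| ≤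
      Real.sin (acuteAngle 𝕜 x y) := by
  set a := ‖(inner 𝕜 x z : 𝕜)‖ / (‖x‖ * ‖z‖) with hadef
  set b := ‖(inner 𝕜 y z : 𝕜)‖ / (‖y‖ * ‖z‖) with hbdef
  set c := ‖(inner 𝕜 x y : 𝕜)‖ / (‖x‖ * ‖y‖) with hcdef
  have hxn : (0:ℝ) < ‖x‖ := norm_pos_iff.mpr hx
  have hyn : (0:ℝ) < ‖y‖ := norm_pos_iff.mpr hy
  have hzn : (0:ℝ) < ‖z‖ := norm_pos_iff.mpr hz
  have ha0 : 0 ≤ a := by positivity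
  have hb0 : 0 ≤ b := by positivity
  have hc0 : 0 ≤ c := by positivity
  have ha1 : a ≤ 1 := by
    rw [hadef, div_le_one (by positivity)]; exact norm_inner_le_norm x z
  have hb1 : b ≤ 1 := by
    rw [hbdef, div_le_one (by positivity)]; exact norm_inner_le_norm y z
  have hgram : c ≤ a * b + Real.sqrt ((1 - a ^ 2) * (1 - b ^ 2)) := by
    have := gram_ineq (𝕜 := 𝕜) ((‖x‖:𝕜)⁻¹ • x) ((‖y‖:𝕜)⁻¹ • y) ((‖z‖:𝕜)⁻¹ • z)
      (norm_normalize x hx) (norm_normalize y hy) (norm_normalize z hz)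
    rwa [norm_inner_normalize x y, norm_inner_normalize x z, norm_inner_normalize y z] at this
  have := key_alg a b c ha0 hb0 hc0 ha1 hb1 hgram
  simpa [acuteAngle, Real.sin_arccos] using this
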